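/- Let Q_t(μ,·) be Markov kernels with first moments ∫ ⟨h,ν⟩ Q_t(μ,dν) = R_t h evaluated against μ, where R_t h ≤ C·h·e^{−δt}. Then for any μ, μ̃, the Wasserstein-1 distance (with respect to the weighted total variation metric) satisfies W₁(Q_t(μ,·), Q_t(μ̃,·)) ≤ C·e^{−δt}·(⟨h,μ⟩ + ⟨h,μ̃⟩). -/
import Mathlib


open MeasureTheory
open scoped ENNReal

/-- The Wasserstein-1 "distance" associated to a cost `d`, defined as the infimum of the
expected cost over all couplings. -/
noncomputable def wassersteinOne {M : Type*} [MeasurableSpace M]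
    (d : M → M → ℝ≥0∞) (ρ σ : Measure M) : ℝ≥0∞ :=
  ⨅ (H : Measure (M × M)) (_ : H.map Prod.fst = ρ ∧ H.map Prod.snd = σ),
    ∫⁻ p, d p.1 p.2 ∂H

/-- If `Q_t(μ,·)` has first moments `∫ ⟨h,ν⟩ Q_t(μ,dν) = ⟨R_t h, μ⟩` with
`R_t h ≤ C h e^{-δ t}`, and the cost satisfies `d(ν,ν') ≤ ⟨h,ν⟩ + ⟨h,ν'⟩`, then
`W₁(Q_t(μ,·), Q_t(μ',·)) ≤ C e^{-δ t} (⟨h,μ⟩ + ⟨h,μ'⟩)`. -/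
theorem wasserstein_kernel_bound
    {E M : Type*} [MeasurableSpace M]
    (h : E → ℝ) (pair : (E → ℝ) → M → ℝ)
    (hpairh_nonneg : ∀ ν, 0 ≤ pair h ν)
    (hpairh_meas : Measurable fun ν => pair h ν)
    (hpair_mono : ∀ (g₁ g₂ : E → ℝ) μ, (∀ x, g₁ x ≤ g₂ x) → pair g₁ μ ≤ pair g₂ μ)
    (hpair_smul : ∀ (c : ℝ) μ, 0 ≤ c → pair (fun x => c * h x) μ = c * pair h μ)
    (d : M → M → ℝ≥0∞)
    (hd_tri : ∀ ν ν' : M, d ν ν' ≤ ENNReal.ofReal (pair h ν + pair h ν'))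
    (Q : ℝ → M → Measure M) (hQprob : ∀ t μ, IsProbabilityMeasure (Q t μ))
    (R : ℝ → (E → ℝ) → E → ℝ)
    (C δ : ℝ) (hC : 0 < C) (hδ : 0 < δ)
    (hmom : ∀ t μ, ∫ ν, pair h ν ∂(Q t μ) = pair (R t h) μ)
    (hint : ∀ t μ, Integrable (fun ν => pair h ν) (Q t μ))
    (hRh : ∀ t, 0 ≤ t → ∀ x, R t h x ≤ C * h x * Real.exp (-δ * t)) :
    ∀ t, 0 ≤ t → ∀ μ μ' : M,
      wassersteinOne d (Q t μ) (Q t μ')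
        ≤ ENNReal.ofReal (C * Real.exp (-δ * t) * (pair h μ + pair h μ')) := by
  intro t ht μ μ'
  haveI hP := hQprob t μ
  haveI hP' := hQprob t μ'
  set c : ℝ := C * Real.exp (-δ * t) with hc
  have hc0 : 0 ≤ c := le_of_lt (by positivity)
  -- bound each moment
  have hbound : ∀ ρ : M, ∫ ν, pair h ν ∂(Q t ρ) ≤ c * pair h ρ := by
    intro ρ
    rw [hmom t ρ]
    calc pair (R t h) ρ ≤ pair (fun x => c * h x) ρ := by
          apply hpair_mono
          intro x
          calc R t h x ≤ C * h x * Real.exp (-δ * t) := hRh t ht x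
            _ = c * h x := by rw [hc]; ring
      _ = c * pair h ρ := hpair_smul c ρ hc0
  -- the product coupling
  have hfst : (Measure.map Prod.fst ((Q t μ).prod (Q t μ'))) = Q t μ := by
    rw [Measure.map_fst_prod, measure_univ, one_smul]
  have hsnd : (Measure.map Prod.snd ((Q t μ).prod (Q t μ'))) = Q t μ' := by
    rw [Measure.map_snd_prod, measure_univ, one_smul]
  have step1 : wassersteinOne d (Q t μ) (Q t μ')
      ≤ ∫⁻ p, d p.1 p.2 ∂((Q t μ).prod (Q t μ')) := by
    exact iInf_le_of_le ((Q t μ).prod (Q t μ')) (iInf_le_of_le ⟨hfst, hsnd⟩ le_rfl)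
  have step2 : ∫⁻ p, d p.1 p.2 ∂((Q t μ).prod (Q t μ'))
      ≤ ∫⁻ p : M × M, (ENNReal.ofReal (pair h p.1) + ENNReal.ofReal (pair h p.2))
          ∂((Q t μ).prod (Q t μ')) := by
    apply lintegral_mono
    intro p
    refine (hd_tri p.1 p.2).trans ?_
    rw [ENNReal.ofReal_add (hpairh_nonneg _) (hpairh_nonneg _)]
  have m1 : Measurable fun p : M × M => ENNReal.ofReal (pair h p.1) :=
    (ENNReal.measurable_ofReal.comp hpairh_meas).comp measurable_fst
  have m2 : Measurable fun p : M × M => ENNReal.ofReal (pair h p.2) :=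
    (ENNReal.measurable_ofReal.comp hpairh_meas).comp measurable_snd
  have e1 : ∫⁻ p : M × M, ENNReal.ofReal (pair h p.1) ∂((Q t μ).prod (Q t μ'))
      = ∫⁻ ν, ENNReal.ofReal (pair h ν) ∂(Q t μ) := by
    conv_rhs => rw [← hfst]
    rw [lintegral_map (f := fun ν => ENNReal.ofReal (pair h ν))
      (ENNReal.measurable_ofReal.comp hpairh_meas) measurable_fst]
  have e2 : ∫⁻ p : M × M, ENNReal.ofReal (pair h p.2) ∂((Q t μ).prod (Q t μ'))
      = ∫⁻ ν, ENNReal.ofReal (pair h ν) ∂(Q t μ') := by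
    conv_rhs => rw [← hsnd]
    rw [lintegral_map (f := fun ν => ENNReal.ofReal (pair h ν))
      (ENNReal.measurable_ofReal.comp hpairh_meas) measurable_snd]
  have eint : ∀ ρ : M, ∫⁻ ν, ENNReal.ofReal (pair h ν) ∂(Q t ρ)
      = ENNReal.ofReal (∫ ν, pair h ν ∂(Q t ρ)) := by
    intro ρ
    rw [← ofReal_integral_eq_lintegral_ofReal (hint t ρ)
      (Filter.Eventually.of_forall fun ν => hpairh_nonneg ν)]
  calc wassersteinOne d (Q t μ) (Q t μ')
      ≤ ∫⁻ p : M × M, (ENNReal.ofReal (pair h p.1) + ENNReal.ofReal (pair h p.2))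
          ∂((Q t μ).prod (Q t μ')) := step1.trans step2
    _ = ENNReal.ofReal (∫ ν, pair h ν ∂(Q t μ)) + ENNReal.ofReal (∫ ν, pair h ν ∂(Q t μ')) := by
        rw [lintegral_add_left m1, e1, e2, eint, eint]
    _ ≤ ENNReal.ofReal (c * pair h μ) + ENNReal.ofReal (c * pair h μ') := by
        exact add_le_add (ENNReal.ofReal_le_ofReal (hbound μ))
          (ENNReal.ofReal_le_ofReal (hbound μ'))
    _ = ENNReal.ofReal (c * (pair h μ + pair h μ')) := by
        rw [← ENNReal.ofReal_add (mul_nonneg hc0 (hpairh_nonneg μ))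
          (mul_nonneg hc0 (hpairh_nonneg μ'))]
        ring_nf
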